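/- Let p ≥ 4 be an even integer and let D_p ⊂ ℤ^p be the set of totally degenerate tuples, i.e., tuples (n₁,…,n_p) for which there exists a fixed-point-free involution σ of {1,…,p} with n_{σ(j)} = −n_j for all j. Let m : A_p → ℂ be of class M_p^{μ,ν}. Then the function m·𝟙_{D_p} (equal to m on A_p ∩ D_p and to 0 on A_p \ D_p) is again of class M_p^{μ,ν}; moreover if m is of class M_{p+}^{μ,ν} (resp. M_{p−}^{μ,ν}) then so is m·𝟙_{D_p}. In particular, m ↦ m·𝟙_{D_p} is a linear projection preserving the class and the parity. -/

import Mathlib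

/-- A_p = {(n₁,…,n_p) ∈ ℤ^p : n₁+⋯+n_p = 0 and |n_j| ≥ 3 for all j}. -/
def Ap (p : ℕ) (v : Fin p → ℤ) : Prop := (∑ i, v i) = 0 ∧ ∀ i, 3 ≤ |v i|

/-- The list |n₁|,…,|n_p| sorted in decreasing order. -/
def sortedAbs {p : ℕ} (v : Fin p → ℤ) : List ℤ :=
  List.insertionSort (fun a b => b ≤ a) (List.ofFn fun i => |v i|)

/-- N = the largest among |n₁|,…,|n_p|. -/
def bigN {p : ℕ} (v : Fin p → ℤ) : ℤ := (sortedAbs v).getD 0 0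

/-- n = the third largest among |n₁|,…,|n_p|. -/
def thirdN {p : ℕ} (v : Fin p → ℤ) : ℤ := (sortedAbs v).getD 2 0

/-- The tuple (n₁,…,n_j+x,…,n_k−x,…,n_p). -/
def shiftT {p : ℕ} (v : Fin p → ℤ) (j k : Fin p) (x : ℤ) : Fin p → ℤ :=
  fun i => if i = j then v i + x else if i = k then v i - x else v i

/-- Iterated unit forward difference Δ^q. -/
def itDiff : ℕ → (ℤ → ℂ) → ℤ → ℂ
  | 0, g => g
  | q + 1, g => fun x => itDiff q g (x + 1) - itDiff q g x

/-- The dispersion relation λ(n) = sgn(n)·(1 + 3/(n² − 4)) for |n| ≥ 3, 0 otherwise. -/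
noncomputable def lam (n : ℤ) : ℝ :=
  if 3 ≤ |n| then (Int.sign n : ℝ) * (1 + 3 / ((n : ℝ) ^ 2 - 4)) else 0

/-- The class M_p^{μ,ν}: (i) |m| ≤ C₀·N^μ·n^{ν(0)} on A_p, and (ii) for every q ≥ 1
there are δ_q, C_q > 0 such that the q-th iterated difference of m in the directions
e_j − e_k is O(N^{μ−q}·n^{ν(q)}) whenever n < δ_q·N, n < |n_j|, n < |n_k| (with all
shifted tuples remaining in A_p). -/
def MClass (p : ℕ) (μ : ℝ) (ν : ℕ → ℝ) (m : (Fin p → ℤ) → ℂ) : Prop :=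
  (∃ C₀ : ℝ, 0 < C₀ ∧ ∀ v : Fin p → ℤ, Ap p v →
      ‖m v‖ ≤ C₀ * (bigN v : ℝ) ^ μ * (thirdN v : ℝ) ^ ν 0) ∧
  ∀ q : ℕ, 1 ≤ q → ∃ δ C : ℝ, 0 < δ ∧ 0 < C ∧ ∀ v : Fin p → ℤ, Ap p v →
    ∀ j k : Fin p, j ≠ k → (thirdN v : ℝ) < δ * (bigN v : ℝ) →
    thirdN v < |v j| → thirdN v < |v k| →
    (∀ x : ℤ, 0 ≤ x → x ≤ (q : ℤ) → Ap p (shiftT v j k x)) →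
    ‖itDiff q (fun x => m (shiftT v j k x)) 0‖ ≤
      C * (bigN v : ℝ) ^ (μ - (q : ℝ)) * (thirdN v : ℝ) ^ ν q

/-- Even parity on A_p: m(−n₁,…,−n_p) = m(n₁,…,n_p). -/
def EvenPar (p : ℕ) (m : (Fin p → ℤ) → ℂ) : Prop :=
  ∀ v : Fin p → ℤ, Ap p v → m (fun i => -(v i)) = m v

/-- Odd parity on A_p: m(−n₁,…,−n_p) = −m(n₁,…,n_p). -/
def OddPar (p : ℕ) (m : (Fin p → ℤ) → ℂ) : Prop :=
  ∀ v : Fin p → ℤ, Ap p v → m (fun i => -(v i)) = -m v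

/-- D_p = totally degenerate tuples: there is a fixed-point-free involution σ of
{1,…,p} with n_{σ(j)} = −n_j for all j. -/
def Dp (p : ℕ) (v : Fin p → ℤ) : Prop :=
  ∃ σ : Equiv.Perm (Fin p), (∀ j, σ (σ j) = j) ∧ (∀ j, σ j ≠ j) ∧ ∀ j, v (σ j) = -(v j)


section Aux

lemma sortedAbs_length' {p : ℕ} (v : Fin p → ℤ) : (sortedAbs v).length = p := by
  simp [sortedAbs]

lemma mem_sortedAbs' {p : ℕ} (v : Fin p → ℤ) (i : Fin p) : |v i| ∈ sortedAbs v := by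
  rw [sortedAbs, (List.perm_insertionSort _ _).mem_iff]
  simp [List.mem_ofFn]

lemma of_mem_sortedAbs' {p : ℕ} (v : Fin p → ℤ) (a : ℤ) (h : a ∈ sortedAbs v) :
    ∃ i, a = |v i| := by
  rw [sortedAbs, (List.perm_insertionSort _ _).mem_iff] at h
  simp [List.mem_ofFn] at h
  obtain ⟨i, hi⟩ := h
  exact ⟨i, hi.symm⟩

lemma sortedAbs_anti' {p : ℕ} (v : Fin p → ℤ) {a b : ℕ} (hab : a ≤ b)
    (hb : b < (sortedAbs v).length) :
    (sortedAbs v)[b]'hb ≤ (sortedAbs v)[a]'(lt_of_le_of_lt hab hb) := by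
  rcases eq_or_lt_of_le hab with rfl | h
  · exact le_refl _
  · exact (List.pairwise_iff_getElem.mp (List.pairwise_insertionSort _ _)) a b _ hb h

lemma bigN_eq' {p : ℕ} (v : Fin p → ℤ) (hp : 0 < p) :
    bigN v = (sortedAbs v)[0]'(by rw [sortedAbs_length']; omega) := by
  rw [bigN, List.getD_eq_getElem]

lemma thirdN_eq' {p : ℕ} (v : Fin p → ℤ) (hp : 3 ≤ p) :
    thirdN v = (sortedAbs v)[2]'(by rw [sortedAbs_length']; omega) := by
  rw [thirdN, List.getD_eq_getElem]

lemma le_bigN' {p : ℕ} (v : Fin p → ℤ) (i : Fin p) : |v i| ≤ bigN v := by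
  have hp : 0 < p := i.pos
  rw [bigN_eq' v hp]
  have hm := mem_sortedAbs' v i
  obtain ⟨a, ha, he⟩ := List.getElem_of_mem hm
  rw [← he]
  exact sortedAbs_anti' v (Nat.zero_le a) ha

lemma bigN_mem' {p : ℕ} (v : Fin p → ℤ) (hp : 0 < p) : ∃ i, bigN v = |v i| := by
  rw [bigN_eq' v hp]
  exact of_mem_sortedAbs' v _ (List.getElem_mem _)

lemma thirdN_mem' {p : ℕ} (v : Fin p → ℤ) (hp : 3 ≤ p) : ∃ i, thirdN v = |v i| := by
  rw [thirdN_eq' v hp]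
  exact of_mem_sortedAbs' v _ (List.getElem_mem _)

lemma not_three_gt' {p : ℕ} (v : Fin p → ℤ) (hp : 3 ≤ p) {i j k : Fin p}
    (hij : i ≠ j) (hik : i ≠ k) (hjk : j ≠ k)
    (hi : thirdN v < |v i|) (hj : thirdN v < |v j|) (hk : thirdN v < |v k|) : False := by
  set l := sortedAbs v with hl
  set pred : ℤ → Bool := fun a => decide (thirdN v < a) with hpred
  have hlen : l.length = p := sortedAbs_length' v
  have hup : l.countP pred ≤ 2 := by
    have hsplit : l = l.take 2 ++ l.drop 2 := (List.take_append_drop 2 l).symm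
    have h1 : (l.take 2).countP pred ≤ 2 := by
      calc (l.take 2).countP pred ≤ (l.take 2).length := List.countP_le_length
        _ ≤ 2 := by simp
    have h2 : (l.drop 2).countP pred = 0 := by
      rw [List.countP_eq_zero]
      intro a ha
      obtain ⟨b, hb, he⟩ := List.getElem_of_mem ha
      rw [List.getElem_drop] at he
      have hble : a ≤ l[2]'(by rw [hlen]; omega) := by
        rw [← he]
        exact sortedAbs_anti' v (by omega) _
      simp only [hpred, decide_eq_true_eq, not_lt]
      rw [thirdN_eq' v hp]
      exact hble
    calc l.countP pred = (l.take 2).countP pred + (l.drop 2).countP pred := by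
          rw [← List.countP_append, ← hsplit]
      _ ≤ 2 := by omega
  have hperm : (List.ofFn fun i => |v i|).countP pred = l.countP pred :=
    ((List.perm_insertionSort _ _).countP_eq pred).symm
  have hmap : (List.ofFn fun i => |v i|) = (List.finRange p).map (fun i => |v i|) :=
    List.ofFn_eq_map
  have hcnt : ((List.finRange p).countP (fun i => pred |v i|)) ≥ 3 := by
    rw [List.countP_eq_length_filter]
    set f := (List.finRange p).filter (fun i => pred |v i|) with hf
    have hnd : f.Nodup := (List.nodup_finRange p).filter _
    have hmemi : i ∈ f := by
      rw [hf, List.mem_filter]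
      exact ⟨List.mem_finRange i, by simp [hpred, hi]⟩
    have hmemj : j ∈ f := by
      rw [hf, List.mem_filter]
      exact ⟨List.mem_finRange j, by simp [hpred, hj]⟩
    have hmemk : k ∈ f := by
      rw [hf, List.mem_filter]
      exact ⟨List.mem_finRange k, by simp [hpred, hk]⟩
    have hsub : ({i, j, k} : Finset (Fin p)) ⊆ f.toFinset := by
      intro a ha
      simp only [Finset.mem_insert, Finset.mem_singleton] at ha
      rcases ha with rfl | rfl | rfl <;> simp [List.mem_toFinset, hmemi, hmemj, hmemk]
    have hcard : ({i, j, k} : Finset (Fin p)).card = 3 := by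
      rw [Finset.card_insert_of_notMem (by simp [hij, hik]),
          Finset.card_insert_of_notMem (by simp [hjk]), Finset.card_singleton]
    have := Finset.card_le_card hsub
    rw [List.toFinset_card_of_nodup hnd] at this
    omega
  have hge : (List.ofFn fun i => |v i|).countP pred ≥ 3 := by
    rw [hmap, List.countP_map]
    exact hcnt
  omega

lemma itDiff_congr' (q : ℕ) (g h : ℤ → ℂ) : ∀ x : ℤ,
    (∀ y, x ≤ y → y ≤ x + q → g y = h y) → itDiff q g x = itDiff q h x := by
  induction q with
  | zero => intro x H; exact H x le_rfl (by simp)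
  | succ q ih =>
    intro x H
    simp only [itDiff]
    rw [ih (x+1) (fun y h1 h2 => H y (by omega) (by push_cast at h2 ⊢; omega)),
        ih x (fun y h1 h2 => H y h1 (by push_cast at h2 ⊢; omega))]

lemma itDiff_zero_fun' (q : ℕ) : ∀ x : ℤ, itDiff q (fun _ => (0:ℂ)) x = 0 := by
  induction q with
  | zero => intro x; rfl
  | succ q ih => intro x; simp only [itDiff, ih, sub_zero]

lemma shiftT_j' {p : ℕ} (v : Fin p → ℤ) (j k : Fin p) (x : ℤ) :
    shiftT v j k x j = v j + x := by simp [shiftT]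
lemma shiftT_k' {p : ℕ} (v : Fin p → ℤ) (j k : Fin p) (hjk : j ≠ k) (x : ℤ) :
    shiftT v j k x k = v k - x := by simp [shiftT, Ne.symm hjk]
lemma shiftT_other' {p : ℕ} (v : Fin p → ℤ) (j k : Fin p) (x : ℤ) {i : Fin p}
    (h1 : i ≠ j) (h2 : i ≠ k) : shiftT v j k x i = v i := by simp [shiftT, h1, h2]

/-- backward direction -/
lemma dp_shift_of' {p : ℕ} (v : Fin p → ℤ) (j k : Fin p) (hjk : j ≠ k) (x : ℤ)
    (h : ∃ σ : Equiv.Perm (Fin p), (∀ i, σ (σ i) = i) ∧ (∀ i, σ i ≠ i) ∧ σ j = k ∧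
      ∀ i, v (σ i) = -(v i)) :
    Dp p (shiftT v j k x) := by
  obtain ⟨σ, hinv, hfpf, hσj, hval⟩ := h
  have hσk : σ k = j := by rw [← hσj, hinv]
  refine ⟨σ, hinv, hfpf, fun i => ?_⟩
  by_cases hij : i = j
  · subst hij
    rw [hσj, shiftT_k' v i k hjk, shiftT_j']
    have hvk : v k = -(v i) := by rw [← hσj, hval]
    rw [hvk]; ring
  · by_cases hik : i = k
    · subst hik
      rw [hσk, shiftT_j', shiftT_k' v j i hjk]
      have hvj : v j = -(v i) := by rw [← hσk, hval]
      rw [hvj]; ring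
    · have h1 : σ i ≠ j := by
        intro h; apply hik; rw [← hinv i, h, hσj]
      have h2 : σ i ≠ k := by
        intro h; apply hij; rw [← hinv i, h, hσk]
      rw [shiftT_other' v j k x h1 h2, shiftT_other' v j k x hij hik]
      exact hval i

/-- forward direction -/
lemma dp_shift_to' {p : ℕ} (v : Fin p → ℤ) (j k : Fin p) (hjk : j ≠ k) (x : ℤ)
    (n : ℤ)
    (hsmall : ∀ i, i ≠ j → i ≠ k → |v i| ≤ n)
    (hbig : n < |v j + x|)
    (h : Dp p (shiftT v j k x)) :
    ∃ σ : Equiv.Perm (Fin p), (∀ i, σ (σ i) = i) ∧ (∀ i, σ i ≠ i) ∧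
      σ j = k ∧ ∀ i, v (σ i) = -(v i) := by
  obtain ⟨σ, hinv, hfpf, hval⟩ := h
  set w := shiftT v j k x with hw
  have hσj : σ j = k := by
    by_contra hne
    have hwj : |w (σ j)| ≤ n := by
      rw [hw, shiftT_other' v j k x (hfpf j) hne]
      exact hsmall _ (hfpf j) hne
    rw [hval j, abs_neg, hw, shiftT_j'] at hwj
    omega
  have hσk : σ k = j := by rw [← hσj, hinv]
  have hvk : v k = -(v j) := by
    have := hval j
    rw [hσj, hw, shiftT_k' v j k hjk, shiftT_j'] at this
    omega
  refine ⟨σ, hinv, hfpf, hσj, fun i => ?_⟩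
  by_cases hij : i = j
  · subst hij; rw [hσj, hvk]
  · by_cases hik : i = k
    · subst hik; rw [hσk, hvk]; ring
    · have h1 : σ i ≠ j := by
        intro h; apply hik; rw [← hinv i, h, hσj]
      have h2 : σ i ≠ k := by
        intro h; apply hij; rw [← hinv i, h, hσk]
      have := hval i
      rwa [hw, shiftT_other' v j k x h1 h2, shiftT_other' v j k x hij hik] at this

lemma Ap_neg' {p : ℕ} (v : Fin p → ℤ) (h : Ap p v) : Ap p (fun i => -(v i)) := by
  refine ⟨by rw [Finset.sum_neg_distrib, h.1, neg_zero], fun i => by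
    simpa using h.2 i⟩

lemma Dp_neg_iff' {p : ℕ} (v : Fin p → ℤ) : Dp p (fun i => -(v i)) ↔ Dp p v := by
  constructor <;> rintro ⟨σ, h1, h2, h3⟩ <;> refine ⟨σ, h1, h2, fun i => ?_⟩
  · have := h3 i
    simp only [neg_inj] at this
    omega
  · simp only [neg_inj]
    exact h3 i

end Aux

/-- Restriction to the set of totally degenerate tuples (the projection m ↦ m·𝟙_{D_p})
preserves the class M_p^{μ,ν} and the parity. -/
theorem stmt10 (p : ℕ) (hp : 4 ≤ p) (hpe : Even p) (μ : ℝ) (ν : ℕ → ℝ) (hν : Monotone ν)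
    (m : (Fin p → ℤ) → ℂ) (hm : MClass p μ ν m)
    (m' : (Fin p → ℤ) → ℂ)
    (hD : ∀ v : Fin p → ℤ, Ap p v → Dp p v → m' v = m v)
    (hDc : ∀ v : Fin p → ℤ, Ap p v → ¬ Dp p v → m' v = 0) :
    MClass p μ ν m' ∧
    (EvenPar p m → EvenPar p m') ∧
    (OddPar p m → OddPar p m') := by
  have hAp3 : (3:ℕ) ≤ p := by omega
  have key_pos : ∀ v : Fin p → ℤ, Ap p v → 3 ≤ thirdN v ∧ 3 ≤ bigN v := by
    intro v hv
    obtain ⟨i, hi⟩ := thirdN_mem' v hAp3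
    obtain ⟨i0, hi0⟩ := bigN_mem' v (by omega)
    exact ⟨hi ▸ hv.2 i, hi0 ▸ hv.2 i0⟩
  refine ⟨⟨?_, ?_⟩, ?_, ?_⟩
  · -- part (i)
    obtain ⟨⟨C₀, hC₀, hbd⟩, _⟩ := hm
    refine ⟨C₀, hC₀, fun v hv => ?_⟩
    by_cases hdp : Dp p v
    · rw [hD v hv hdp]; exact hbd v hv
    · rw [hDc v hv hdp]
      simp only [norm_zero]
      obtain ⟨h3n, h3N⟩ := key_pos v hv
      have hN : (0:ℝ) ≤ (bigN v : ℝ) := by exact_mod_cast (by omega : (0:ℤ) ≤ bigN v)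
      have hn : (0:ℝ) ≤ (thirdN v : ℝ) := by exact_mod_cast (by omega : (0:ℤ) ≤ thirdN v)
      exact mul_nonneg (mul_nonneg hC₀.le (Real.rpow_nonneg hN _)) (Real.rpow_nonneg hn _)
  · -- part (ii)
    intro q hq
    obtain ⟨_, hdiff⟩ := hm
    obtain ⟨δ, C, hδ, hC, hbd⟩ := hdiff q hq
    have hpR : (4:ℝ) ≤ (p:ℝ) := by exact_mod_cast hp
    have hp1 : (0:ℝ) < 2*((p:ℝ)-1) := by linarith
    have hq1 : (0:ℝ) < 4*(q:ℝ)+1 := by positivity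
    refine ⟨min δ (min ((2*((p:ℝ)-1))⁻¹) (3*(4*(q:ℝ)+1)⁻¹)), C,
      lt_min hδ (lt_min (by positivity) (by positivity)), hC, ?_⟩
    intro v hv j k hjk hreg hj hk hshift
    obtain ⟨h3n, h3N⟩ := key_pos v hv
    set nZ := thirdN v with hnZ
    set NZ := bigN v with hNZ
    have hnR : (3:ℝ) ≤ (nZ:ℝ) := by exact_mod_cast h3n
    have hNR : (0:ℝ) < (NZ:ℝ) := by exact_mod_cast (by omega : (0:ℤ) < NZ)
    have hregδ : (nZ:ℝ) < δ * NZ :=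
      lt_of_lt_of_le hreg (mul_le_mul_of_nonneg_right (min_le_left _ _) hNR.le)
    have ha : (nZ:ℝ) < (2*((p:ℝ)-1))⁻¹ * NZ :=
      lt_of_lt_of_le hreg (mul_le_mul_of_nonneg_right
        (le_trans (min_le_right _ _) (min_le_left _ _)) hNR.le)
    have hb : (nZ:ℝ) < 3*(4*(q:ℝ)+1)⁻¹ * NZ :=
      lt_of_lt_of_le hreg (mul_le_mul_of_nonneg_right
        (le_trans (min_le_right _ _) (min_le_right _ _)) hNR.le)
    have h1 : (nZ:ℝ) * (2*((p:ℝ)-1)) < NZ := by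
      have h := mul_lt_mul_of_pos_right ha hp1
      have he : (2*((p:ℝ)-1))⁻¹ * (NZ:ℝ) * (2*((p:ℝ)-1)) = NZ := by
        have : (p:ℝ)-1 ≠ 0 := by linarith
        field_simp
      rwa [he] at h
    have h2 : (nZ:ℝ) * (4*(q:ℝ)+1) < 3 * NZ := by
      have h := mul_lt_mul_of_pos_right hb hq1
      have he : 3*(4*(q:ℝ)+1)⁻¹ * (NZ:ℝ) * (4*(q:ℝ)+1) = 3 * NZ := by field_simp
      rwa [he] at h
    have h4q : 4*(q:ℝ)+1 < (NZ:ℝ) := by nlinarith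
    have hNbigR : ((p:ℝ)-1)*(nZ:ℝ) + 2*(q:ℝ) < (NZ:ℝ) := by nlinarith
    have hNbigZ : ((p:ℤ)-1)*nZ + 2*(q:ℤ) < NZ := by exact_mod_cast hNbigR
    have hsmall : ∀ i, i ≠ j → i ≠ k → |v i| ≤ nZ := by
      intro i hij hik
      by_contra hlt
      push_neg at hlt
      exact not_three_gt' v hAp3 hij hik hjk hlt hj hk
    -- lower bound on |v j|
    have hsum2 : |v j + v k| ≤ ((p:ℤ)-2) * nZ := by
      have hsub : ({j, k} : Finset (Fin p)) ⊆ Finset.univ := Finset.subset_univ _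
      have hsd := Finset.sum_sdiff (f := v) hsub
      rw [hv.1, Finset.sum_pair hjk] at hsd
      have hvjk : v j + v k = -∑ i ∈ Finset.univ \ {j, k}, v i := by linarith
      rw [hvjk, abs_neg]
      calc |∑ i ∈ Finset.univ \ {j, k}, v i| ≤ ∑ i ∈ Finset.univ \ {j, k}, |v i| :=
            Finset.abs_sum_le_sum_abs _ _
        _ ≤ ∑ _i ∈ Finset.univ \ {j, k}, nZ := by
            apply Finset.sum_le_sum
            intro i hi
            simp only [Finset.mem_sdiff, Finset.mem_insert, Finset.mem_singleton,
              not_or] at hi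
            exact hsmall i hi.2.1 hi.2.2
        _ = ((p:ℤ)-2) * nZ := by
            rw [Finset.sum_const, Finset.card_sdiff_of_subset (Finset.subset_univ _)]
            rw [Finset.card_univ, Fintype.card_fin, Finset.card_pair hjk]
            rw [nsmul_eq_mul]
            congr 1
            have : (2:ℕ) ≤ p := by omega
            push_cast [Nat.cast_sub this]
            ring
    have hmaxjk : NZ = |v j| ∨ NZ = |v k| := by
      obtain ⟨i0, hi0⟩ := bigN_mem' v (by omega : 0 < p)
      by_cases hij : i0 = j
      · left; rw [hNZ, ← hij]; exact hi0
      · by_cases hik : i0 = k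
        · right; rw [hNZ, ← hik]; exact hi0
        · exfalso
          have h5 := hsmall i0 hij hik
          have h6 := le_bigN' v j
          rw [← hNZ] at h6
          omega
    have hjlow : NZ - ((p:ℤ)-2)*nZ ≤ |v j| := by
      rcases hmaxjk with he | he
      · have : 0 ≤ ((p:ℤ)-2)*nZ := by
          apply mul_nonneg <;> omega
        omega
      · have habs : |v k| ≤ |v j + v k| + |v j| := by
          calc |v k| = |(v j + v k) + (-(v j))| := by ring_nf
            _ ≤ |v j + v k| + |(-(v j))| := abs_add_le _ _
            _ = |v j + v k| + |v j| := by rw [abs_neg]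
        omega
    have hjkbig : ∀ x : ℤ, 0 ≤ x → x ≤ (q:ℤ) → nZ < |v j + x| := by
      intro x h1x h2x
      have habs : |v j| ≤ |v j + x| + x := by
        calc |v j| = |(v j + x) + (-x)| := by ring_nf
          _ ≤ |v j + x| + |(-x)| := abs_add_le _ _
          _ = |v j + x| + x := by rw [abs_neg, abs_of_nonneg h1x]
      have hrel : ((p:ℤ)-1)*nZ = ((p:ℤ)-2)*nZ + nZ := by ring
      omega
    by_cases hP : ∃ σ : Equiv.Perm (Fin p), (∀ i, σ (σ i) = i) ∧ (∀ i, σ i ≠ i) ∧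
        σ j = k ∧ ∀ i, v (σ i) = -(v i)
    · have heq : itDiff q (fun x => m' (shiftT v j k x)) 0 =
          itDiff q (fun x => m (shiftT v j k x)) 0 := by
        apply itDiff_congr'
        intro y hy1 hy2
        exact hD _ (hshift y hy1 (by omega)) (dp_shift_of' v j k hjk y hP)
      rw [heq]
      exact hbd v hv j k hjk hregδ hj hk hshift
    · have hzero : itDiff q (fun x => m' (shiftT v j k x)) 0 = 0 := by
        rw [itDiff_congr' q _ (fun _ => (0:ℂ)) 0 (fun y hy1 hy2 => ?_)]
        · exact itDiff_zero_fun' q 0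
        · apply hDc _ (hshift y hy1 (by omega))
          intro hdp
          exact hP (dp_shift_to' v j k hjk y nZ hsmall (hjkbig y hy1 (by omega)) hdp)
      rw [hzero, norm_zero]
      have hn0 : (0:ℝ) ≤ (nZ:ℝ) := by linarith
      exact mul_nonneg (mul_nonneg hC.le (Real.rpow_nonneg hNR.le _))
        (Real.rpow_nonneg hn0 _)
  · -- even parity
    intro hEv v hv
    have hvneg := Ap_neg' v hv
    by_cases hdp : Dp p v
    · rw [hD _ hvneg ((Dp_neg_iff' v).2 hdp), hEv v hv, hD v hv hdp]
    · rw [hDc _ hvneg (fun h => hdp ((Dp_neg_iff' v).1 h)), hDc v hv hdp]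
  · -- odd parity
    intro hOd v hv
    have hvneg := Ap_neg' v hv
    by_cases hdp : Dp p v
    · rw [hD _ hvneg ((Dp_neg_iff' v).2 hdp), hOd v hv, hD v hv hdp]
    · rw [hDc _ hvneg (fun h => hdp ((Dp_neg_iff' v).1 h)), hDc v hv hdp, neg_zero]
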